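/- (Lemma 3, even case: lattice point count in an ellipsoidal annulus.) For every even integer d ≥ 4 and every ε > 0 there exists a constant C, depending only on d, ε, θ_min and θ_max, such that for every real N ≥ 1 and every ℓ ∈ ℝ, the number of points m ∈ ℤ^d with |m_j| ≤ N for all j and |Q(m) − ℓ| ≤ 1 is at most C · N^{d − 2 + ε}. -/

import Mathlib

open Finset

theorem divisor_bound {δ : ℝ} (hδ : 0 < δ) :
    ∃ C : ℝ, 1 ≤ C ∧ ∀ n : ℕ, n ≠ 0 → (n.divisors.card : ℝ) ≤ C * (n : ℝ) ^ δ := by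
  set c := δ * Real.log 2 with hc
  have hc0 : 0 < c := mul_pos hδ (Real.log_pos one_lt_two)
  set K := 1 + 1 / c with hK
  have hK1 : 1 ≤ K := le_add_of_nonneg_right (by positivity)
  set T : ℕ := ⌈(2:ℝ) ^ (1/δ)⌉₊ with hT
  refine ⟨K ^ T, one_le_pow₀ hK1, fun n hn => ?_⟩
  -- key factor bound
  have key : ∀ p ∈ n.primeFactors, ((n.factorization p + 1 : ℕ) : ℝ)
      ≤ (if p < T then K else 1) * ((p:ℝ) ^ (n.factorization p : ℕ)) ^ δ := by
    intro p hp
    have hp2 : 2 ≤ p := (Nat.prime_of_mem_primeFactors hp).two_le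
    set a := n.factorization p with ha
    have hpR : (2:ℝ) ≤ (p:ℝ) := by exact_mod_cast hp2
    have hbase : (0:ℝ) < (p:ℝ) ^ a := by positivity
    by_cases hpc : p < T
    · simp only [hpc, if_true]
      -- (a+1) ≤ K * (p^a)^δ  using (p^a)^δ ≥ 2^(aδ) = exp(a c) ≥ 1 + a c
      have h1 : ((2:ℝ) ^ (a:ℕ)) ^ δ ≤ ((p:ℝ) ^ a) ^ δ := by
        apply Real.rpow_le_rpow (by positivity) (pow_le_pow_left₀ (by norm_num) hpR a) hδ.le
      have h2 : ((2:ℝ) ^ (a:ℕ)) ^ δ = Real.exp ((a:ℝ) * c) := by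
        rw [← Real.rpow_natCast (2:ℝ) a, ← Real.rpow_mul (by norm_num)]
        rw [Real.rpow_def_of_pos (by norm_num)]
        ring_nf
        congr 1; rw [hc]; ring
      have h3 : 1 + (a:ℝ) * c ≤ Real.exp ((a:ℝ) * c) := by
        have := Real.add_one_le_exp ((a:ℝ) * c); linarith
      have h4 : ((a:ℝ) + 1) ≤ K * (1 + (a:ℝ) * c) := by
        have ha0 : (0:ℝ) ≤ (a:ℝ) := Nat.cast_nonneg a
        have e : K * (1 + (a:ℝ) * c) = 1 + (a:ℝ)*c + 1/c + (1/c)*((a:ℝ)*c) := by rw [hK]; ring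
        have e2 : (1/c)*((a:ℝ)*c) = (a:ℝ) := by field_simp
        rw [e, e2]
        have h5 : 0 ≤ (a:ℝ) * c := by positivity
        have h6 : 0 ≤ 1/c := by positivity
        linarith
      push_cast
      calc ((a:ℝ) + 1) ≤ K * (1 + (a:ℝ)*c) := h4
        _ ≤ K * Real.exp ((a:ℝ)*c) := by nlinarith [Real.exp_pos ((a:ℝ)*c)]
        _ = K * ((2:ℝ) ^ (a:ℕ)) ^ δ := by rw [h2]
        _ ≤ K * ((p:ℝ) ^ a) ^ δ := by nlinarith [h1, Real.rpow_nonneg (le_of_lt (by positivity : (0:ℝ) < (2:ℝ)^(a:ℕ))) δ]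
    · simp only [hpc, if_false, one_mul]
      -- p ≥ T means p^δ ≥ 2, so a+1 ≤ 2^a ≤ (p^δ)^a
      have hpT : (T:ℝ) ≤ (p:ℝ) := by exact_mod_cast Nat.le_of_not_lt hpc
      have h2 : (2:ℝ) ≤ (p:ℝ) ^ δ := by
        have h0 : (2:ℝ) ^ (1/δ) ≤ (p:ℝ) :=
          le_trans (Nat.le_ceil _) hpT
        calc (2:ℝ) = ((2:ℝ) ^ (1/δ)) ^ δ := by
              rw [← Real.rpow_mul (by norm_num), one_div_mul_cancel hδ.ne', Real.rpow_one]
          _ ≤ (p:ℝ) ^ δ := Real.rpow_le_rpow (by positivity) h0 hδ.le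
      have h3 : ((a:ℕ) + 1 : ℝ) ≤ (2:ℝ) ^ (a:ℕ) := by
        exact_mod_cast Nat.succ_le_of_lt (Nat.lt_two_pow_self (n := a))
      have h4 : (2:ℝ) ^ (a:ℕ) ≤ ((p:ℝ) ^ δ) ^ (a:ℕ) :=
        pow_le_pow_left₀ (by norm_num) h2 a
      have h5 : ((p:ℝ) ^ δ) ^ (a:ℕ) = ((p:ℝ) ^ (a:ℕ)) ^ δ := by
        rw [← Real.rpow_natCast ((p:ℝ)^δ) a, ← Real.rpow_mul (by positivity),
          mul_comm, Real.rpow_mul (by positivity), Real.rpow_natCast]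
      push_cast
      push_cast at h3
      linarith [h4, h5 ▸ h4]
  have hcast : (n.divisors.card : ℝ) = ∏ p ∈ n.primeFactors, ((n.factorization p + 1 : ℕ) : ℝ) := by
    rw [Nat.card_divisors hn]; push_cast; rfl
  rw [hcast]
  have step1 : ∏ p ∈ n.primeFactors, ((n.factorization p + 1 : ℕ) : ℝ)
      ≤ ∏ p ∈ n.primeFactors, ((if p < T then K else 1) * ((p:ℝ) ^ (n.factorization p : ℕ)) ^ δ) :=
    Finset.prod_le_prod (fun p _ => by positivity) key
  have step2 : ∏ p ∈ n.primeFactors, ((if p < T then K else 1) * ((p:ℝ) ^ (n.factorization p : ℕ)) ^ δ)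
      = (∏ p ∈ n.primeFactors, (if p < T then K else 1))
        * ∏ p ∈ n.primeFactors, ((p:ℝ) ^ (n.factorization p : ℕ)) ^ δ := Finset.prod_mul_distrib
  have step3 : ∏ p ∈ n.primeFactors, ((p:ℝ) ^ (n.factorization p : ℕ)) ^ δ = (n:ℝ) ^ δ := by
    rw [Real.finset_prod_rpow _ _ (fun p _ => by positivity)]
    congr 1
    have : ∏ p ∈ n.primeFactors, (p:ℝ) ^ (n.factorization p : ℕ)
        = ((∏ p ∈ n.primeFactors, p ^ n.factorization p : ℕ) : ℝ) := by push_cast; rfl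
    rw [this]
    norm_cast
    conv_rhs => rw [← Nat.factorization_prod_pow_eq_self hn]
    rw [Finsupp.prod, Nat.support_factorization]
  have step4 : (∏ p ∈ n.primeFactors, (if p < T then K else 1)) ≤ K ^ T := by
    rw [Finset.prod_ite, Finset.prod_const, Finset.prod_const, one_pow, mul_one]
    apply pow_le_pow_right₀ hK1
    calc (n.primeFactors.filter (· < T)).card ≤ (Finset.range T).card := by
          apply Finset.card_le_card
          intro p hp
          simp only [Finset.mem_filter] at hp
          exact Finset.mem_range.mpr hp.2
      _ = T := Finset.card_range T
  calc ∏ p ∈ n.primeFactors, ((n.factorization p + 1 : ℕ) : ℝ)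
      ≤ _ := step1
    _ = _ := step2
    _ ≤ K ^ T * (n:ℝ) ^ δ := by
        rw [step3]
        exact mul_le_mul_of_nonneg_right step4 (Real.rpow_nonneg (Nat.cast_nonneg n) δ)

theorem sqdiff_count_ne (v : ℤ) (hv : v ≠ 0) (s : Finset (ℤ × ℤ)) :
    (s.filter fun p => p.1 ^ 2 - p.2 ^ 2 = v).card ≤ 2 * v.natAbs.divisors.card := by
  classical
  set D : Finset ℤ := v.natAbs.divisors.image (fun t : ℕ => (t : ℤ))
      ∪ v.natAbs.divisors.image (fun t : ℕ => -(t : ℤ)) with hD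
  have hcard : D.card ≤ 2 * v.natAbs.divisors.card := by
    calc D.card ≤ _ + _ := Finset.card_union_le _ _
      _ ≤ v.natAbs.divisors.card + v.natAbs.divisors.card :=
          add_le_add (Finset.card_image_le) (Finset.card_image_le)
      _ = 2 * v.natAbs.divisors.card := by ring
  refine le_trans (Finset.card_le_card_of_injOn (fun p => p.1 - p.2) ?_ ?_) hcard
  · intro p hp
    rw [Finset.mem_coe, Finset.mem_filter] at hp
    have hpv := hp.2
    have hdvd : (p.1 - p.2) ∣ v := ⟨p.1 + p.2, by linear_combination -hpv⟩
    have hne : p.1 - p.2 ≠ 0 := by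
      intro h0
      apply hv
      rw [← hpv]
      have : p.1 = p.2 := by linarith
      rw [this]; ring
    have hmem : (p.1 - p.2).natAbs ∈ v.natAbs.divisors :=
      Nat.mem_divisors.mpr ⟨Int.natAbs_dvd_natAbs.mpr hdvd, Int.natAbs_ne_zero.mpr hv⟩
    rcases Int.natAbs_eq (p.1 - p.2) with h | h
    · exact Finset.mem_union_left _ (Finset.mem_image.mpr ⟨_, hmem, h.symm⟩)
    · exact Finset.mem_union_right _ (Finset.mem_image.mpr ⟨_, hmem, h.symm⟩)
  · intro p hp q hq hpq
    simp only [Finset.coe_filter, Set.mem_setOf_eq] at hp hq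
    simp only at hpq
    have hne : p.1 - p.2 ≠ 0 := by
      intro h0
      apply hv
      rw [← hp.2]
      have : p.1 = p.2 := by linarith
      rw [this]; ring
    have hv2 : (p.1 - p.2) * (p.1 + p.2) = (q.1 - q.2) * (q.1 + q.2) := by
      linear_combination hp.2 - hq.2
    rw [← hpq] at hv2
    have h2 : p.1 + p.2 = q.1 + q.2 := mul_left_cancel₀ hne hv2
    have h1 : p.1 = q.1 := by omega
    have h2' : p.2 = q.2 := by omega
    exact Prod.ext h1 h2'

theorem sqdiff_count_zero (s' : Finset ℤ) :
    ((s' ×ˢ s').filter fun p : ℤ × ℤ => p.1 ^ 2 - p.2 ^ 2 = 0).card ≤ 2 * s'.card := by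
  classical
  refine le_trans (Finset.card_le_card (?_ :
      _ ⊆ s'.biUnion fun b => ({(b, b), (-b, b)} : Finset (ℤ × ℤ)))) ?_
  · intro p hp
    simp only [Finset.mem_filter, Finset.mem_product] at hp
    have h0 : (p.1 - p.2) * (p.1 + p.2) = 0 := by linear_combination hp.2
    refine Finset.mem_biUnion.mpr ⟨p.2, hp.1.2, ?_⟩
    rcases mul_eq_zero.mp h0 with h | h
    · have : p.1 = p.2 := by linarith
      simp [Finset.mem_insert, Prod.ext_iff, this]
    · have : p.1 = -p.2 := by linarith
      simp [Finset.mem_insert, Prod.ext_iff, this]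
  · refine le_trans (Finset.card_biUnion_le) ?_
    calc ∑ b ∈ s', (({(b, b), (-b, b)} : Finset (ℤ × ℤ))).card
        ≤ ∑ _b ∈ s', 2 := Finset.sum_le_sum (fun b _ => Finset.card_insert_le _ _)
      _ = 2 * s'.card := by rw [Finset.sum_const, smul_eq_mul, mul_comm]

theorem int_window_card (lo hi : ℝ) (h : lo ≤ hi) :
    ((Finset.Icc ⌈lo⌉ ⌊hi⌋).card : ℝ) ≤ hi - lo + 1 := by
  by_cases hle : ⌈lo⌉ ≤ ⌊hi⌋
  · rw [Int.card_Icc]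
    have hnn : (0:ℤ) ≤ ⌊hi⌋ + 1 - ⌈lo⌉ := by omega
    have e : (((⌊hi⌋ + 1 - ⌈lo⌉).toNat : ℕ) : ℝ) = ((⌊hi⌋ + 1 - ⌈lo⌉ : ℤ) : ℝ) := by
      exact_mod_cast congrArg (Int.cast : ℤ → ℝ) (Int.toNat_of_nonneg hnn)
    rw [e]
    push_cast
    have h1 : (⌊hi⌋ : ℝ) ≤ hi := Int.floor_le hi
    have h2 : lo ≤ (⌈lo⌉ : ℝ) := Int.le_ceil lo
    linarith
  · rw [Finset.Icc_eq_empty hle]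
    simp
    linarith

theorem pair_window (θmin δ Cδ : ℝ) (hθmin : 0 < θmin) (hδ : 0 ≤ δ) (hCδ : 1 ≤ Cδ)
    (hdiv : ∀ n : ℕ, n ≠ 0 → (n.divisors.card : ℝ) ≤ Cδ * (n : ℝ) ^ δ)
    (θ0 : ℝ) (hθ0 : θmin ≤ θ0) (M : ℤ) (hM : 1 ≤ M) (N : ℝ) (hMN : (M : ℝ) ≤ N) (c : ℝ) :
    (((Finset.Icc (-M) M ×ˢ Finset.Icc (-M) M).filter
        (fun p : ℤ × ℤ => |θ0 * ((p.1 : ℝ) ^ 2 - (p.2 : ℝ) ^ 2) + c| ≤ 1)).card : ℝ)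
      ≤ (2 / θmin + 1) * (2 * Cδ * N ^ (2 * δ))
        + (if |c| ≤ 1 then 2 * ((Finset.Icc (-M) M).card : ℝ) else 0) := by
  classical
  have hθ0pos : 0 < θ0 := lt_of_lt_of_le hθmin hθ0
  have hN1 : (1:ℝ) ≤ N := le_trans (by exact_mod_cast hM) hMN
  set lo : ℝ := (-1 - c) / θ0 with hlo
  set hi : ℝ := (1 - c) / θ0 with hhi
  have hlohi : lo ≤ hi := by
    rw [hlo, hhi]
    exact div_le_div_of_nonneg_right (by linarith) hθ0pos.le
  set box := Finset.Icc (-M) M with hbox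
  set W := Finset.Icc ⌈lo⌉ ⌊hi⌋ with hW
  have hNpow : (0:ℝ) ≤ N ^ (2 * δ) := Real.rpow_nonneg (by linarith) _
  have hboxc : (0:ℝ) ≤ (box.card : ℝ) := Nat.cast_nonneg _
  -- subset of biUnion
  have hsub : (box ×ˢ box).filter
        (fun p : ℤ × ℤ => |θ0 * ((p.1 : ℝ) ^ 2 - (p.2 : ℝ) ^ 2) + c| ≤ 1)
      ⊆ W.biUnion (fun v => (box ×ˢ box).filter (fun p : ℤ × ℤ => p.1 ^ 2 - p.2 ^ 2 = v)) := by
    intro p hp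
    simp only [Finset.mem_filter] at hp
    obtain ⟨hpmem, hpcond⟩ := hp
    set v : ℤ := p.1 ^ 2 - p.2 ^ 2 with hv
    have hcast : ((v : ℤ) : ℝ) = (p.1 : ℝ) ^ 2 - (p.2 : ℝ) ^ 2 := by rw [hv]; push_cast; ring
    rw [abs_le] at hpcond
    have h1 : lo ≤ (v : ℝ) := by
      rw [hlo, div_le_iff₀ hθ0pos]
      rw [hcast]; linarith [hpcond.1]
    have h2 : (v : ℝ) ≤ hi := by
      rw [hhi, le_div_iff₀ hθ0pos]
      rw [hcast]; linarith [hpcond.2]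
    refine Finset.mem_biUnion.mpr ⟨v, ?_, Finset.mem_filter.mpr ⟨hpmem, rfl⟩⟩
    rw [hW, Finset.mem_Icc]
    exact ⟨Int.ceil_le.mpr h1, Int.le_floor.mpr h2⟩
  -- per-v bound
  have hperv : ∀ v ∈ W, (((box ×ˢ box).filter (fun p : ℤ × ℤ => p.1 ^ 2 - p.2 ^ 2 = v)).card : ℝ)
      ≤ 2 * Cδ * N ^ (2 * δ) + (if v = 0 then 2 * (box.card : ℝ) else 0) := by
    intro v _
    by_cases hv0 : v = 0
    · subst hv0
      simp only [if_true]
      have := sqdiff_count_zero box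
      have hcast : (((box ×ˢ box).filter (fun p : ℤ × ℤ => p.1 ^ 2 - p.2 ^ 2 = 0)).card : ℝ)
          ≤ 2 * (box.card : ℝ) := by exact_mod_cast this
      nlinarith [hcast, mul_nonneg (by linarith : (0:ℝ) ≤ 2 * Cδ) hNpow]
    · simp only [hv0, if_false, add_zero]
      by_cases hbig : (v.natAbs : ℤ) ≤ M ^ 2
      · have h1 := sqdiff_count_ne v hv0 (box ×ˢ box)
        have h2 : ((v.natAbs.divisors.card : ℕ) : ℝ) ≤ Cδ * (v.natAbs : ℝ) ^ δ :=
          hdiv v.natAbs (Int.natAbs_ne_zero.mpr hv0)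
        have h3 : ((v.natAbs : ℕ) : ℝ) ^ δ ≤ N ^ (2 * δ) := by
          have ha : ((v.natAbs : ℕ) : ℝ) ≤ (N : ℝ) ^ (2 : ℕ) := by
            have h0 : ((v.natAbs : ℤ) : ℝ) ≤ ((M ^ 2 : ℤ) : ℝ) := by exact_mod_cast hbig
            have hM0 : (1:ℝ) ≤ (M:ℝ) := by exact_mod_cast hM
            have hMsq : ((M:ℝ)) ^ 2 ≤ N ^ 2 := by nlinarith [hMN]
            push_cast at h0
            push_cast [Nat.cast_natAbs]
            linarith
          calc ((v.natAbs : ℕ) : ℝ) ^ δ ≤ ((N : ℝ) ^ (2 : ℕ)) ^ δ :=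
                Real.rpow_le_rpow (Nat.cast_nonneg _) ha hδ
            _ = N ^ (2 * δ) := by
                rw [← Real.rpow_natCast N 2, ← Real.rpow_mul (by linarith)]
                norm_num
        calc (((box ×ˢ box).filter (fun p : ℤ × ℤ => p.1 ^ 2 - p.2 ^ 2 = v)).card : ℝ)
            ≤ 2 * (v.natAbs.divisors.card : ℝ) := by exact_mod_cast h1
          _ ≤ 2 * (Cδ * (v.natAbs : ℝ) ^ δ) := by linarith
          _ ≤ 2 * (Cδ * N ^ (2 * δ)) := by
              have : (v.natAbs : ℝ) ^ δ ≤ N ^ (2*δ) := h3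
              nlinarith [this, (by linarith : (0:ℝ) ≤ Cδ)]
          _ = 2 * Cδ * N ^ (2 * δ) := by ring
      · -- filter is empty
        have hemp : (box ×ˢ box).filter (fun p : ℤ × ℤ => p.1 ^ 2 - p.2 ^ 2 = v) = ∅ := by
          rw [Finset.filter_eq_empty_iff]
          intro p hp
          simp only [hbox, Finset.mem_product, Finset.mem_Icc] at hp
          intro heq
          apply hbig
          have h1 : p.1 ^ 2 ≤ M ^ 2 := by nlinarith [hp.1.1, hp.1.2]
          have h2 : p.2 ^ 2 ≤ M ^ 2 := by nlinarith [hp.2.1, hp.2.2]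
          have h3 : (0:ℤ) ≤ p.1 ^ 2 := sq_nonneg _
          have h4 : (0:ℤ) ≤ p.2 ^ 2 := sq_nonneg _
          rw [← heq]
          rcases Int.natAbs_eq (p.1 ^ 2 - p.2 ^ 2) with h | h <;> omega
        rw [hemp]
        simp only [Finset.card_empty, Nat.cast_zero]
        positivity
  -- assemble
  have hWcard : ((W.card : ℕ) : ℝ) ≤ 2 / θmin + 1 := by
    have := int_window_card lo hi hlohi
    have heq : hi - lo = 2 / θ0 := by rw [hhi, hlo]; field_simp; ring
    have h2 : 2 / θ0 ≤ 2 / θmin := by gcongr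
    rw [hW]
    calc ((Finset.Icc ⌈lo⌉ ⌊hi⌋).card : ℝ) ≤ hi - lo + 1 := this
      _ = 2 / θ0 + 1 := by rw [heq]
      _ ≤ 2 / θmin + 1 := by linarith
  calc (((box ×ˢ box).filter
        (fun p : ℤ × ℤ => |θ0 * ((p.1 : ℝ) ^ 2 - (p.2 : ℝ) ^ 2) + c| ≤ 1)).card : ℝ)
      ≤ ((W.biUnion (fun v => (box ×ˢ box).filter
          (fun p : ℤ × ℤ => p.1 ^ 2 - p.2 ^ 2 = v))).card : ℝ) := by
        exact_mod_cast Finset.card_le_card hsub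
    _ ≤ ∑ v ∈ W, (((box ×ˢ box).filter (fun p : ℤ × ℤ => p.1 ^ 2 - p.2 ^ 2 = v)).card : ℝ) := by
        exact_mod_cast Finset.card_biUnion_le
    _ ≤ ∑ v ∈ W, (2 * Cδ * N ^ (2 * δ) + (if v = 0 then 2 * (box.card : ℝ) else 0)) :=
        Finset.sum_le_sum hperv
    _ = (W.card : ℝ) * (2 * Cδ * N ^ (2 * δ))
        + (if (0:ℤ) ∈ W then 2 * (box.card : ℝ) else 0) := by
        rw [Finset.sum_add_distrib, Finset.sum_const, Finset.sum_ite_eq' W (0:ℤ)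
          (fun _ => 2 * (box.card : ℝ)), nsmul_eq_mul]
    _ ≤ (2 / θmin + 1) * (2 * Cδ * N ^ (2 * δ))
        + (if |c| ≤ 1 then 2 * ((Finset.Icc (-M) M).card : ℝ) else 0) := by
        have hX : (0:ℝ) ≤ 2 * Cδ * N ^ (2 * δ) := by positivity
        have hite : (if (0:ℤ) ∈ W then 2 * (box.card : ℝ) else 0)
            ≤ (if |c| ≤ 1 then 2 * ((Finset.Icc (-M) M).card : ℝ) else 0) := by
          by_cases h0W : (0:ℤ) ∈ W
          · have hc1 : |c| ≤ 1 := by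
              rw [hW, Finset.mem_Icc] at h0W
              have hlo0 : lo ≤ 0 := by exact_mod_cast Int.ceil_le.mp h0W.1
              have hhi0 : (0:ℝ) ≤ hi := by exact_mod_cast Int.le_floor.mp h0W.2
              rw [hlo, div_nonpos_iff] at hlo0
              rw [hhi, le_div_iff₀ hθ0pos] at hhi0
              rw [abs_le]
              constructor
              · rcases hlo0 with ⟨h1, _⟩ | ⟨h1, h2⟩
                · linarith
                · linarith
              · linarith
            simp only [h0W, if_true, hc1, if_true, hbox]
            exact le_refl _
          · simp only [h0W, if_false]
            split <;> positivity
        have h1 := mul_le_mul_of_nonneg_right hWcard hX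
        linarith

/-- The "energy set": pairs of lattice points in `[-M,M]^k` whose `Q`-values (shifted by `s`)
are within 1 of each other. -/
noncomputable def eset (k : ℕ) (θ : Fin k → ℝ) (M : ℤ) (s : ℝ) : Finset ((Fin k → ℤ) × (Fin k → ℤ)) :=
  (Fintype.piFinset (fun _ : Fin k => Finset.Icc (-M) M)
      ×ˢ Fintype.piFinset (fun _ : Fin k => Finset.Icc (-M) M)).filter
    (fun x => |(∑ j, θ j * ((x.1 j : ℝ) ^ 2 - (x.2 j : ℝ) ^ 2)) + s| ≤ 1)

theorem eset_zero (θ : Fin 0 → ℝ) (M : ℤ) (s : ℝ) : (eset 0 θ M s).card ≤ 1 := by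
  classical
  calc (eset 0 θ M s).card ≤ (Fintype.piFinset (fun _ : Fin 0 => Finset.Icc (-M) M)
      ×ˢ Fintype.piFinset (fun _ : Fin 0 => Finset.Icc (-M) M)).card := Finset.card_filter_le _ _
    _ = 1 := by
        rw [Finset.card_product, Fintype.card_piFinset]
        simp

theorem eset_step (θmin δ Cδ : ℝ) (hθmin : 0 < θmin) (hδ : 0 ≤ δ) (hCδ : 1 ≤ Cδ)
    (hdiv : ∀ n : ℕ, n ≠ 0 → (n.divisors.card : ℝ) ≤ Cδ * (n : ℝ) ^ δ)
    (k : ℕ) (θ : Fin (k + 1) → ℝ) (hθ : ∀ j, θmin ≤ θ j)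
    (M : ℤ) (hM : 1 ≤ M) (N : ℝ) (hMN : (M : ℝ) ≤ N) (s : ℝ) :
    ((eset (k + 1) θ M s).card : ℝ)
      ≤ ((Fintype.piFinset (fun _ : Fin k => Finset.Icc (-M) M)).card : ℝ) ^ 2
          * ((2 / θmin + 1) * (2 * Cδ * N ^ (2 * δ)))
        + 2 * ((Finset.Icc (-M) M).card : ℝ)
          * ((eset k (fun j => θ j.succ) M s).card : ℝ) := by
  classical
  set box := Finset.Icc (-M) M with hbox
  set T := Fintype.piFinset (fun _ : Fin k => box) with hT
  set f : ((Fin (k + 1) → ℤ) × (Fin (k + 1) → ℤ)) → ((Fin k → ℤ) × (Fin k → ℤ)) :=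
    fun x => (Fin.tail x.1, Fin.tail x.2) with hf
  set c : ((Fin k → ℤ) × (Fin k → ℤ)) → ℝ :=
    fun τ => (∑ j, θ j.succ * ((τ.1 j : ℝ) ^ 2 - (τ.2 j : ℝ) ^ 2)) + s with hc
  have hmap : ∀ x ∈ eset (k + 1) θ M s, f x ∈ T ×ˢ T := by
    intro x hx
    simp only [eset, Finset.mem_filter, Finset.mem_product, Fintype.mem_piFinset] at hx
    simp only [Finset.mem_product, hT, Fintype.mem_piFinset]
    exact ⟨fun i => hx.1.1 i.succ, fun i => hx.1.2 i.succ⟩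
  have hcount := Finset.card_eq_sum_card_fiberwise hmap
  -- per-fiber bound
  have hfiber : ∀ τ ∈ T ×ˢ T, (((eset (k + 1) θ M s).filter (fun x => f x = τ)).card : ℝ)
      ≤ (((box ×ˢ box).filter
          (fun p : ℤ × ℤ => |θ 0 * ((p.1 : ℝ) ^ 2 - (p.2 : ℝ) ^ 2) + c τ| ≤ 1)).card : ℝ) := by
    intro τ hτ
    have : ((eset (k + 1) θ M s).filter (fun x => f x = τ)).card
        ≤ ((box ×ˢ box).filter
          (fun p : ℤ × ℤ => |θ 0 * ((p.1 : ℝ) ^ 2 - (p.2 : ℝ) ^ 2) + c τ| ≤ 1)).card := by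
      apply Finset.card_le_card_of_injOn (fun x => (x.1 0, x.2 0))
      · intro x hx
        rw [Finset.mem_coe, Finset.mem_filter] at hx
        obtain ⟨hx1, hx2⟩ := hx
        simp only [eset, Finset.mem_filter, Finset.mem_product, Fintype.mem_piFinset] at hx1
        refine Finset.mem_filter.mpr ⟨Finset.mem_product.mpr ⟨hx1.1.1 0, hx1.1.2 0⟩, ?_⟩
        have hsum : (∑ j, θ j * ((x.1 j : ℝ) ^ 2 - (x.2 j : ℝ) ^ 2))
            = θ 0 * ((x.1 0 : ℝ) ^ 2 - (x.2 0 : ℝ) ^ 2)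
              + ∑ j : Fin k, θ j.succ * ((x.1 j.succ : ℝ) ^ 2 - (x.2 j.succ : ℝ) ^ 2) :=
          Fin.sum_univ_succ _
        have hcc : c τ = (∑ j : Fin k, θ j.succ * ((x.1 j.succ : ℝ) ^ 2
            - (x.2 j.succ : ℝ) ^ 2)) + s := by
          rw [hc, ← hx2]
          simp [hf, Fin.tail]
        rw [hcc]
        have := hx1.2
        rw [hsum] at this
        convert this using 2
        ring
      · intro x hx y hy hxy
        simp only [Finset.coe_filter, Set.mem_setOf_eq] at hx hy
        have hx2 := hx.2; have hy2 := hy.2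
        simp only [Prod.ext_iff] at hxy
        have htail : Fin.tail x.1 = Fin.tail y.1 ∧ Fin.tail x.2 = Fin.tail y.2 := by
          rw [hf] at hx2 hy2
          have := hx2.trans hy2.symm
          exact ⟨congrArg Prod.fst this, congrArg Prod.snd this⟩
        refine Prod.ext ?_ ?_
        · funext i
          refine Fin.cases ?_ ?_ i
          · exact hxy.1
          · intro j; exact congrFun htail.1 j
        · funext i
          refine Fin.cases ?_ ?_ i
          · exact hxy.2
          · intro j; exact congrFun htail.2 j
    exact_mod_cast this
  -- sum the pair_window bounds
  have hpw : ∀ τ ∈ T ×ˢ T, (((box ×ˢ box).filter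
        (fun p : ℤ × ℤ => |θ 0 * ((p.1 : ℝ) ^ 2 - (p.2 : ℝ) ^ 2) + c τ| ≤ 1)).card : ℝ)
      ≤ (2 / θmin + 1) * (2 * Cδ * N ^ (2 * δ))
        + (if |c τ| ≤ 1 then 2 * ((box.card : ℕ) : ℝ) else 0) := by
    intro τ _
    exact pair_window θmin δ Cδ hθmin hδ hCδ hdiv (θ 0) (hθ 0) M hM N hMN (c τ)
  have hsum_ite : ∑ τ ∈ T ×ˢ T, (if |c τ| ≤ 1 then (2 * ((box.card : ℕ) : ℝ)) else 0)
      = 2 * ((box.card : ℕ) : ℝ) * ((eset k (fun j => θ j.succ) M s).card : ℝ) := by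
    have hfeq : ((T ×ˢ T).filter (fun τ => |c τ| ≤ 1)) = eset k (fun j => θ j.succ) M s := by
      simp only [eset, hT, hbox, hc]
    rw [Finset.sum_ite, Finset.sum_const, Finset.sum_const_zero, add_zero, nsmul_eq_mul, hfeq]
    ring
  have hcast : ((eset (k + 1) θ M s).card : ℝ)
      = ∑ τ ∈ T ×ˢ T, (((eset (k + 1) θ M s).filter (fun x => f x = τ)).card : ℝ) := by
    exact_mod_cast hcount
  calc ((eset (k + 1) θ M s).card : ℝ)
      = ∑ τ ∈ T ×ˢ T, (((eset (k + 1) θ M s).filter (fun x => f x = τ)).card : ℝ) := hcast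
    _ ≤ ∑ τ ∈ T ×ˢ T, (((box ×ˢ box).filter
          (fun p : ℤ × ℤ => |θ 0 * ((p.1 : ℝ) ^ 2 - (p.2 : ℝ) ^ 2) + c τ| ≤ 1)).card : ℝ) :=
        Finset.sum_le_sum hfiber
    _ ≤ ∑ τ ∈ T ×ˢ T, ((2 / θmin + 1) * (2 * Cδ * N ^ (2 * δ))
          + (if |c τ| ≤ 1 then 2 * ((box.card : ℕ) : ℝ) else 0)) := Finset.sum_le_sum hpw
    _ = ((T ×ˢ T).card : ℝ) * ((2 / θmin + 1) * (2 * Cδ * N ^ (2 * δ)))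
          + 2 * ((box.card : ℕ) : ℝ) * ((eset k (fun j => θ j.succ) M s).card : ℝ) := by
        rw [Finset.sum_add_distrib, Finset.sum_const, hsum_ite, nsmul_eq_mul]
    _ = _ := by
        rw [Finset.card_product]
        push_cast
        ring

theorem box_card_le (M : ℤ) (hM : 1 ≤ M) (N : ℝ) (hMN : (M : ℝ) ≤ N) :
    ((Finset.Icc (-M) M).card : ℝ) ≤ 3 * N ∧ (0:ℝ) ≤ ((Finset.Icc (-M) M).card : ℝ) := by
  constructor
  · rw [Int.card_Icc]
    have h1 : (0:ℤ) ≤ M + 1 - (-M) := by omega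
    have e : (((M + 1 - (-M)).toNat : ℕ) : ℝ) = ((M + 1 - (-M) : ℤ) : ℝ) := by
      exact_mod_cast congrArg (Int.cast : ℤ → ℝ) (Int.toNat_of_nonneg h1)
    rw [e]
    push_cast
    have : (1:ℝ) ≤ (M:ℝ) := by exact_mod_cast hM
    linarith
  · positivity

theorem T_card_le (k : ℕ) (M : ℤ) (hM : 1 ≤ M) (N : ℝ) (hMN : (M : ℝ) ≤ N) :
    ((Fintype.piFinset (fun _ : Fin k => Finset.Icc (-M) M)).card : ℝ) ≤ (3 * N) ^ k := by
  rw [Fintype.card_piFinset]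
  simp only [Finset.prod_const, Finset.card_univ, Fintype.card_fin]
  push_cast
  exact pow_le_pow_left₀ (by positivity) (box_card_le M hM N hMN).1 k

theorem eset_bound (θmin δ Cδ : ℝ) (hθmin : 0 < θmin) (hδ : 0 ≤ δ) (hCδ : 1 ≤ Cδ)
    (hdiv : ∀ n : ℕ, n ≠ 0 → (n.divisors.card : ℝ) ≤ Cδ * (n : ℝ) ^ δ)
    (M : ℤ) (hM : 1 ≤ M) (N : ℝ) (hMN : (M : ℝ) ≤ N) :
    ∀ k : ℕ, ∀ θ : Fin (k + 1) → ℝ, (∀ j, θmin ≤ θ j) → ∀ s : ℝ,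
    ((eset (k + 1) θ M s).card : ℝ)
      ≤ ((k : ℝ) + 1) * ((2 / θmin + 1) * (2 * Cδ * N ^ (2 * δ))) * (9 * N ^ 2) ^ k
        + (6 * N) ^ (k + 1) := by
  have hN1 : (1:ℝ) ≤ N := le_trans (by exact_mod_cast hM) hMN
  have hN0 : (0:ℝ) < N := by linarith
  set W1 := (2 / θmin + 1) * (2 * Cδ * N ^ (2 * δ)) with hW1
  have hN1' : (1:ℝ) ≤ N := le_trans (by exact_mod_cast hM) hMN
  have hW1nn : 0 ≤ W1 := by
    rw [hW1]
    have h1 : (0:ℝ) ≤ N ^ (2 * δ) := Real.rpow_nonneg (by linarith) _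
    have h2 : (0:ℝ) < 2 / θmin := div_pos two_pos hθmin
    have h3 : (0:ℝ) ≤ 2 * Cδ * N ^ (2 * δ) := by nlinarith
    nlinarith
  have hbox := box_card_le M hM N hMN
  have h6N : (0:ℝ) ≤ 6 * N := by linarith
  have h9N : 6 * N ≤ 9 * N ^ 2 := by nlinarith
  intro k
  induction k with
  | zero =>
    intro θ hθ s
    have hstep := eset_step θmin δ Cδ hθmin hδ hCδ hdiv 0 θ hθ M hM N hMN s
    have hT0 : ((Fintype.piFinset (fun _ : Fin 0 => Finset.Icc (-M) M)).card : ℝ) = 1 := by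
      rw [Fintype.card_piFinset]; simp
    have hz : ((eset 0 (fun j => θ j.succ) M s).card : ℝ) ≤ 1 := by
      exact_mod_cast eset_zero _ M s
    have hzn : (0:ℝ) ≤ ((eset 0 (fun j => θ j.succ) M s).card : ℝ) := Nat.cast_nonneg _
    rw [hT0, one_pow, one_mul] at hstep
    have h2z : 2 * ((Finset.Icc (-M) M).card : ℝ)
        * ((eset 0 (fun j => θ j.succ) M s).card : ℝ) ≤ 6 * N := by
      have ha : 2 * ((Finset.Icc (-M) M).card : ℝ)
          * ((eset 0 (fun j => θ j.succ) M s).card : ℝ)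
          ≤ 2 * ((Finset.Icc (-M) M).card : ℝ) * 1 :=
        mul_le_mul_of_nonneg_left hz (by linarith [hbox.2])
      linarith [hbox.1]
    simp only [Nat.cast_zero, pow_zero, zero_add, pow_one]
    nlinarith [hstep, h2z, hW1nn]
  | succ k ih =>
    intro θ hθ s
    have hstep := eset_step θmin δ Cδ hθmin hδ hCδ hdiv (k + 1) θ hθ M hM N hMN s
    rw [← hW1] at hstep
    have hT := T_card_le (k + 1) M hM N hMN
    have hTnn : (0:ℝ) ≤ ((Fintype.piFinset (fun _ : Fin (k+1) => Finset.Icc (-M) M)).card : ℝ) :=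
      Nat.cast_nonneg _
    have hih := ih (fun j => θ j.succ) (fun j => hθ j.succ) s
    have hT2 : ((Fintype.piFinset (fun _ : Fin (k+1) => Finset.Icc (-M) M)).card : ℝ) ^ 2
        ≤ (9 * N ^ 2) ^ (k + 1) := by
      calc _ ≤ ((3 * N) ^ (k+1)) ^ 2 := pow_le_pow_left₀ hTnn hT 2
        _ = (9 * N ^ 2) ^ (k + 1) := by
            rw [← pow_mul, mul_comm (k+1) 2, pow_mul]
            congr 1
            ring
    have hEnn : (0:ℝ) ≤ ((eset (k + 1) (fun j => θ j.succ) M s).card : ℝ) := Nat.cast_nonneg _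
    have hbc : 2 * ((Finset.Icc (-M) M).card : ℝ) ≤ 6 * N := by linarith [hbox.1]
    have hpow9 : (0:ℝ) ≤ (9 * N ^ 2) ^ k := by positivity
    have hpow6 : (0:ℝ) ≤ (6 * N) ^ (k + 1) := by positivity
    calc ((eset (k + 2) θ M s).card : ℝ)
        ≤ _ := hstep
      _ ≤ (9 * N ^ 2) ^ (k + 1) * W1
          + (6 * N) * (((k : ℝ) + 1) * W1 * (9 * N ^ 2) ^ k + (6 * N) ^ (k + 1)) := by
          have h1 : ((Fintype.piFinset (fun _ : Fin (k+1) => Finset.Icc (-M) M)).card : ℝ) ^ 2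
              * W1 ≤ (9 * N ^ 2) ^ (k + 1) * W1 := mul_le_mul_of_nonneg_right hT2 hW1nn
          have h2 : 2 * ((Finset.Icc (-M) M).card : ℝ)
              * ((eset (k + 1) (fun j => θ j.succ) M s).card : ℝ)
              ≤ (6 * N) * (((k : ℝ) + 1) * W1 * (9 * N ^ 2) ^ k + (6 * N) ^ (k + 1)) := by
            apply mul_le_mul hbc hih hEnn h6N
          linarith
      _ ≤ ((k : ℝ) + 1 + 1) * W1 * (9 * N ^ 2) ^ (k + 1) + (6 * N) ^ (k + 2) := by
          have e1 : (6 * N) * (6 * N) ^ (k + 1) = (6 * N) ^ (k + 2) := by ring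
          have h3 : (6 * N) * (((k : ℝ) + 1) * W1 * (9 * N ^ 2) ^ k)
              ≤ (9 * N ^ 2) * (((k : ℝ) + 1) * W1 * (9 * N ^ 2) ^ k) := by
            apply mul_le_mul_of_nonneg_right h9N
            positivity
          have e2 : (9 * N ^ 2) * (((k : ℝ) + 1) * W1 * (9 * N ^ 2) ^ k)
              = ((k : ℝ) + 1) * W1 * (9 * N ^ 2) ^ (k + 1) := by ring
          nlinarith [h3, e2]
      _ = (((k:ℕ) + 1 : ℕ) + 1 : ℝ) * W1 * (9 * N ^ 2) ^ (k + 1) + (6 * N) ^ (k + 1 + 1) := by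
          push_cast; ring_nf

set_option maxHeartbeats 1000000 in
/-- Lemma 3, even case: the number of lattice points `m ∈ [-N, N]^d` with `|Q(m) - ℓ| ≤ 1`,
where `Q(m) = Σ θ_j m_j²`, is at most `C N^{d - 2 + ε}` for even `d ≥ 4`. -/
theorem lattice_count_annulus_even (d : ℕ) (hd4 : 4 ≤ d) (heven : Even d) (ε : ℝ) (hε : 0 < ε)
    (θmin θmax : ℝ) (hθmin : 0 < θmin) (hminmax : θmin ≤ θmax) :
    ∃ C : ℝ, 0 < C ∧
      ∀ (θ : Fin d → ℝ), (∀ j, θmin ≤ θ j ∧ θ j ≤ θmax) →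
      ∀ (N : ℝ), 1 ≤ N → ∀ (ℓ : ℝ),
      (Set.ncard {m : Fin d → ℤ |
          (∀ j, |(m j : ℝ)| ≤ N) ∧ |(∑ j, θ j * (m j : ℝ) ^ 2) - ℓ| ≤ 1} : ℝ)
        ≤ C * N ^ ((d : ℝ) - 2 + ε) := by
  classical
  obtain ⟨ke, rfl⟩ : ∃ t, d = 2 + (t + 1) := ⟨d - 3, by omega⟩
  set e := ke + 1 with he
  have hke1 : 1 ≤ ke := by omega
  obtain ⟨Cδ, hCδ1, hdiv⟩ := divisor_bound (δ := ε / 2) (by positivity)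
  set W0 : ℝ := (2 / θmin + 1) * (2 * Cδ) with hW0
  have hW0pos : 0 < W0 := by
    have h2 : (0:ℝ) < 2 / θmin := div_pos two_pos hθmin
    have : (0:ℝ) < 2 * Cδ := by linarith
    positivity
  set A2 : ℝ := 18 * W0 + 36 with hA2
  set Ae : ℝ := ((ke : ℝ) + 1) * 9 ^ ke * W0 + 6 ^ (ke + 1) with hAe
  have hA2pos : 0 < A2 := by positivity
  have hAepos : 0 < Ae := by positivity
  refine ⟨5 * Real.sqrt (A2 * Ae), by positivity, ?_⟩
  intro θ hθ N hN ℓ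
  set M : ℤ := ⌊N⌋ with hMdef
  have hM : 1 ≤ M := by
    rw [hMdef]; exact Int.le_floor.mpr (by exact_mod_cast hN)
  have hMN : (M : ℝ) ≤ N := Int.floor_le N
  have hN0 : (0:ℝ) < N := by linarith
  set box := Finset.Icc (-M) M with hbox
  set X := Fintype.piFinset (fun _ : Fin 2 => box) with hX
  set Y := Fintype.piFinset (fun _ : Fin e => box) with hY
  set θX : Fin 2 → ℝ := fun i => θ (Fin.castAdd e i) with hθX
  set θY : Fin e → ℝ := fun i => θ (Fin.natAdd 2 i) with hθY
  set F : (Fin 2 → ℤ) → ℝ := fun x => ∑ i, θX i * ((x i : ℝ)) ^ 2 with hF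
  set G : (Fin e → ℤ) → ℝ := fun y => ∑ i, θY i * ((y i : ℝ)) ^ 2 with hG
  set 𝒯 := (X ×ˢ Y).filter (fun z => |F z.1 + G z.2 - ℓ| ≤ 1) with h𝒯
  -- Step 1: the set is the coercion of a Finset, and its card is at most 𝒯.card
  set 𝒮 := (Fintype.piFinset (fun _ : Fin (2 + e) => box)).filter
      (fun m => |(∑ j, θ j * ((m j : ℝ)) ^ 2) - ℓ| ≤ 1) with h𝒮
  have hseteq : {m : Fin (2 + e) → ℤ |
      (∀ j, |(m j : ℝ)| ≤ N) ∧ |(∑ j, θ j * (m j : ℝ) ^ 2) - ℓ| ≤ 1} = (↑𝒮 : Set _) := by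
    ext m
    simp only [Set.mem_setOf_eq, h𝒮, Finset.coe_filter, Finset.mem_coe,
      Fintype.mem_piFinset, Finset.mem_Icc, hbox]
    constructor
    · rintro ⟨h1, h2⟩
      refine ⟨fun j => ?_, h2⟩
      have := h1 j
      rw [abs_le] at this
      constructor
      · rw [hMdef, neg_le]
        exact Int.le_floor.mpr (by push_cast; linarith [this.1])
      · rw [hMdef]
        exact Int.le_floor.mpr (by push_cast; linarith [this.2])
    · rintro ⟨h1, h2⟩
      refine ⟨fun j => ?_, h2⟩
      obtain ⟨ha, hb⟩ := h1 j
      rw [abs_le]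
      constructor
      · have : ((-M : ℤ) : ℝ) ≤ ((m j : ℤ) : ℝ) := by exact_mod_cast ha
        push_cast at this
        linarith [hMN]
      · have : ((m j : ℤ) : ℝ) ≤ ((M : ℤ) : ℝ) := by exact_mod_cast hb
        linarith [hMN]
  have hncard : (Set.ncard {m : Fin (2 + e) → ℤ |
      (∀ j, |(m j : ℝ)| ≤ N) ∧ |(∑ j, θ j * (m j : ℝ) ^ 2) - ℓ| ≤ 1} : ℝ) = (𝒮.card : ℝ) := by
    rw [hseteq, Set.ncard_coe_finset]
  -- Step 2: inject 𝒮 into 𝒯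
  have hST : 𝒮.card ≤ 𝒯.card := by
    apply Finset.card_le_card_of_injOn
      (fun m => ((fun i => m (Fin.castAdd e i)), (fun i => m (Fin.natAdd 2 i))))
    · intro m hm
      simp only [h𝒮, Finset.mem_coe, Finset.mem_filter, Fintype.mem_piFinset] at hm
      refine Finset.mem_filter.mpr ⟨Finset.mem_product.mpr ⟨?_, ?_⟩, ?_⟩
      · rw [hX]; exact Fintype.mem_piFinset.mpr (fun i => hm.1 _)
      · rw [hY]; exact Fintype.mem_piFinset.mpr (fun i => hm.1 _)
      · have hsum : (∑ j, θ j * ((m j : ℝ)) ^ 2)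
            = (∑ i : Fin 2, θ (Fin.castAdd e i) * ((m (Fin.castAdd e i) : ℝ)) ^ 2)
              + ∑ i : Fin e, θ (Fin.natAdd 2 i) * ((m (Fin.natAdd 2 i) : ℝ)) ^ 2 :=
          Fin.sum_univ_add _
        simpa [hF, hG, hθX, hθY, hsum] using hm.2
    · intro m hm m' hm' hmm
      simp only [Prod.ext_iff] at hmm
      funext i
      refine Fin.addCases (fun i0 => ?_) (fun i0 => ?_) i
      · exact congrFun hmm.1 i0
      · exact congrFun hmm.2 i0
  -- Step 3: floor partition covering
  set J : Finset ℤ := Finset.Icc 0 ⌊2 * θmax * N ^ 2⌋ with hJ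
  set C5 : Finset ℤ := Finset.Icc (⌊ℓ⌋ - 3) (⌊ℓ⌋ + 1) with hC5
  set nX : ℤ → ℕ := fun j => ((X.filter (fun x => ⌊F x⌋ = j)).card) with hnX
  set nY : ℤ → ℕ := fun j => ((Y.filter (fun y => ⌊G y⌋ = j)).card) with hnY
  have hθmax0 : 0 < θmax := lt_of_lt_of_le hθmin hminmax
  have hsqbound : ∀ (n : ℤ), n ∈ box → ((n : ℝ)) ^ 2 ≤ N ^ 2 := by
    intro n hn
    rw [hbox, Finset.mem_Icc] at hn
    have h1 : ((-M : ℤ) : ℝ) ≤ (n : ℝ) := by exact_mod_cast hn.1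
    have h2 : ((n : ℤ) : ℝ) ≤ ((M : ℤ) : ℝ) := by exact_mod_cast hn.2
    push_cast at h1
    nlinarith [hMN, h1, h2]
  have hFrange : ∀ x ∈ X, 0 ≤ F x ∧ F x ≤ 2 * θmax * N ^ 2 := by
    intro x hx
    rw [hX, Fintype.mem_piFinset] at hx
    constructor
    · apply Finset.sum_nonneg
      intro i _
      have := (hθ (Fin.castAdd e i)).1
      have h2 : (0:ℝ) ≤ ((x i : ℝ)) ^ 2 := sq_nonneg _
      nlinarith [hθmin]
    · calc F x ≤ ∑ _i : Fin 2, θmax * N ^ 2 := by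
            apply Finset.sum_le_sum
            intro i _
            have h1 := (hθ (Fin.castAdd e i)).2
            have h2 := hsqbound _ (hx i)
            have h3 : (0:ℝ) ≤ ((x i : ℝ)) ^ 2 := sq_nonneg _
            have h4 := (hθ (Fin.castAdd e i)).1
            nlinarith
        _ = 2 * θmax * N ^ 2 := by
            rw [Finset.sum_const, Finset.card_univ, Fintype.card_fin]
            push_cast; ring
  have hcover : 𝒯 ⊆ C5.biUnion (fun cc => J.biUnion (fun j =>
      (X.filter (fun x => ⌊F x⌋ = j)) ×ˢ (Y.filter (fun y => ⌊G y⌋ = cc - j)))) := by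
    intro z hz
    simp only [h𝒯, Finset.mem_filter, Finset.mem_product] at hz
    obtain ⟨⟨hzX, hzY⟩, hzcond⟩ := hz
    set j : ℤ := ⌊F z.1⌋ with hj
    set jG : ℤ := ⌊G z.2⌋ with hjG
    have hFb := hFrange z.1 hzX
    have hjJ : j ∈ J := by
      rw [hJ, Finset.mem_Icc]
      constructor
      · exact Int.le_floor.mpr (by exact_mod_cast hFb.1)
      · exact Int.floor_le_floor hFb.2
    rw [abs_le] at hzcond
    have hf1 : (j : ℝ) ≤ F z.1 := Int.floor_le _
    have hf2 : F z.1 < (j : ℝ) + 1 := Int.lt_floor_add_one _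
    have hg1 : (jG : ℝ) ≤ G z.2 := Int.floor_le _
    have hg2 : G z.2 < (jG : ℝ) + 1 := Int.lt_floor_add_one _
    have hcc : j + jG ∈ C5 := by
      rw [hC5, Finset.mem_Icc]
      constructor
      · have h1 : ((⌊ℓ⌋ - 3 : ℤ) : ℝ) < ((j + jG : ℤ) : ℝ) := by
          push_cast
          have := Int.floor_le ℓ
          linarith [hzcond.1]
        have h2 : (⌊ℓ⌋ - 3 : ℤ) < j + jG := by exact_mod_cast h1
        omega
      · have h1 : ((j + jG : ℤ) : ℝ) ≤ ℓ + 1 := by push_cast; linarith [hzcond.2]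
        have h2 : j + jG ≤ ⌊ℓ + 1⌋ := Int.le_floor.mpr h1
        have h3 : ⌊ℓ + (1:ℝ)⌋ = ⌊ℓ⌋ + 1 := by
          exact_mod_cast Int.floor_add_intCast ℓ 1
        omega
    refine Finset.mem_biUnion.mpr ⟨j + jG, hcc, Finset.mem_biUnion.mpr ⟨j, hjJ, ?_⟩⟩
    refine Finset.mem_product.mpr ⟨Finset.mem_filter.mpr ⟨hzX, rfl⟩,
      Finset.mem_filter.mpr ⟨hzY, by omega⟩⟩
  -- count via the covering
  have hTsum : (𝒯.card : ℝ) ≤ ∑ cc ∈ C5, ∑ j ∈ J, (nX j : ℝ) * (nY (cc - j) : ℝ) := by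
    calc (𝒯.card : ℝ)
        ≤ ((C5.biUnion (fun cc => J.biUnion (fun j =>
            (X.filter (fun x => ⌊F x⌋ = j)) ×ˢ (Y.filter (fun y => ⌊G y⌋ = cc - j))))).card : ℝ) := by
          exact_mod_cast Finset.card_le_card hcover
      _ ≤ ∑ cc ∈ C5, ((J.biUnion (fun j =>
            (X.filter (fun x => ⌊F x⌋ = j)) ×ˢ (Y.filter (fun y => ⌊G y⌋ = cc - j)))).card : ℝ) := by
          exact_mod_cast Finset.card_biUnion_le
      _ ≤ ∑ cc ∈ C5, ∑ j ∈ J, (((X.filter (fun x => ⌊F x⌋ = j))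
            ×ˢ (Y.filter (fun y => ⌊G y⌋ = cc - j))).card : ℝ) := by
          apply Finset.sum_le_sum
          intro cc _
          exact_mod_cast Finset.card_biUnion_le
      _ = ∑ cc ∈ C5, ∑ j ∈ J, (nX j : ℝ) * (nY (cc - j) : ℝ) := by
          apply Finset.sum_congr rfl
          intro cc _
          apply Finset.sum_congr rfl
          intro j _
          rw [Finset.card_product, hnX, hnY]
          push_cast
          ring
  -- energy bounds
  have hθXm : ∀ i, θmin ≤ θX i := fun i => (hθ _).1
  have hθYm : ∀ i, θmin ≤ θY i := fun i => (hθ _).1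
  have hεeq : 2 * (ε / 2) = ε := by ring
  have hE2R := eset_bound θmin (ε/2) Cδ hθmin (by positivity) hCδ1 hdiv M hM N hMN 1 θX hθXm 0
  have hEeR := eset_bound θmin (ε/2) Cδ hθmin (by positivity) hCδ1 hdiv M hM N hMN ke θY hθYm 0
  rw [hεeq] at hE2R hEeR
  have hNε : (0:ℝ) ≤ N ^ ε := Real.rpow_nonneg hN0.le ε
  have hB2 : ((eset 2 θX M 0).card : ℝ) ≤ A2 * N ^ ((2:ℝ) + ε) := by
    have e1 : N ^ ε * N ^ (2:ℕ) = N ^ ((2:ℝ) + ε) := by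
      rw [← Real.rpow_natCast N 2, ← Real.rpow_add hN0]
      norm_num [add_comm]
    have e2 : N ^ (2:ℕ) ≤ N ^ ((2:ℝ) + ε) := by
      rw [← Real.rpow_natCast N 2]
      apply Real.rpow_le_rpow_of_exponent_le hN
      push_cast; linarith
    calc ((eset 2 θX M 0).card : ℝ) ≤ _ := hE2R
      _ = 18 * W0 * (N ^ ε * N ^ (2:ℕ)) + 36 * N ^ (2:ℕ) := by
          rw [hW0]; push_cast; ring
      _ = 18 * W0 * N ^ ((2:ℝ) + ε) + 36 * N ^ (2:ℕ) := by rw [e1]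
      _ ≤ 18 * W0 * N ^ ((2:ℝ) + ε) + 36 * N ^ ((2:ℝ) + ε) := by linarith
      _ = A2 * N ^ ((2:ℝ) + ε) := by rw [hA2]; ring
  have hBe : ((eset e θY M 0).card : ℝ) ≤ Ae * N ^ (2 * (ke:ℝ) + ε) := by
    have e1 : N ^ ε * N ^ (2 * ke : ℕ) = N ^ (2 * (ke:ℝ) + ε) := by
      rw [← Real.rpow_natCast N (2 * ke), ← Real.rpow_add hN0]
      congr 1
      push_cast; ring
    have e2 : N ^ (ke + 1 : ℕ) ≤ N ^ (2 * (ke:ℝ) + ε) := by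
      rw [← Real.rpow_natCast N (ke + 1)]
      apply Real.rpow_le_rpow_of_exponent_le hN
      have : (1:ℝ) ≤ (ke:ℝ) := by exact_mod_cast hke1
      push_cast; linarith
    have e3 : (9 * N ^ 2) ^ ke = 9 ^ ke * N ^ (2 * ke : ℕ) := by
      rw [mul_pow, ← pow_mul]
    have hterm : (0:ℝ) ≤ ((ke:ℝ) + 1) * 9 ^ ke * W0 := by positivity
    calc ((eset e θY M 0).card : ℝ) ≤ _ := hEeR
      _ = ((ke:ℝ) + 1) * 9 ^ ke * W0 * (N ^ ε * N ^ (2 * ke : ℕ))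
          + 6 ^ (ke + 1) * N ^ (ke + 1 : ℕ) := by
          rw [hW0, e3]; push_cast; ring
      _ = ((ke:ℝ) + 1) * 9 ^ ke * W0 * N ^ (2 * (ke:ℝ) + ε)
          + 6 ^ (ke + 1) * N ^ (ke + 1 : ℕ) := by rw [e1]
      _ ≤ ((ke:ℝ) + 1) * 9 ^ ke * W0 * N ^ (2 * (ke:ℝ) + ε)
          + 6 ^ (ke + 1) * N ^ (2 * (ke:ℝ) + ε) := by
          have h6 : (0:ℝ) ≤ (6:ℝ) ^ (ke + 1) := by positivity
          have h7 := mul_le_mul_of_nonneg_left e2 h6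
          linarith
      _ = Ae * N ^ (2 * (ke:ℝ) + ε) := by rw [hAe]; ring
  -- sum of squares vs energies
  have hsubX : ∀ j₀ : ℤ, ((X.filter (fun x => ⌊F x⌋ = j₀))
      ×ˢ (X.filter (fun x => ⌊F x⌋ = j₀))) ⊆ eset 2 θX M 0 := by
    intro j₀ z hz
    rw [Finset.mem_product] at hz
    obtain ⟨hz1, hz2⟩ := hz
    rw [Finset.mem_filter] at hz1 hz2
    simp only [eset, Finset.mem_filter, Finset.mem_product]
    refine ⟨⟨?_, ?_⟩, ?_⟩
    · rw [hX, hbox] at hz1; exact hz1.1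
    · rw [hX, hbox] at hz2; exact hz2.1
    · have hdiff : (∑ i, θX i * ((z.1 i : ℝ) ^ 2 - (z.2 i : ℝ) ^ 2)) = F z.1 - F z.2 := by
        rw [hF]
        simp only [mul_sub]
        rw [Finset.sum_sub_distrib]
      rw [hdiff, add_zero, abs_le]
      have h1 : ((j₀ : ℤ) : ℝ) ≤ F z.1 := hz1.2 ▸ Int.floor_le (F z.1)
      have h2 : F z.1 < ((j₀ : ℤ) : ℝ) + 1 := hz1.2 ▸ Int.lt_floor_add_one (F z.1)
      have h3 : ((j₀ : ℤ) : ℝ) ≤ F z.2 := hz2.2 ▸ Int.floor_le (F z.2)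
      have h4 : F z.2 < ((j₀ : ℤ) : ℝ) + 1 := hz2.2 ▸ Int.lt_floor_add_one (F z.2)
      constructor <;> linarith
  have hsubY : ∀ j₀ : ℤ, ((Y.filter (fun y => ⌊G y⌋ = j₀))
      ×ˢ (Y.filter (fun y => ⌊G y⌋ = j₀))) ⊆ eset e θY M 0 := by
    intro j₀ z hz
    rw [Finset.mem_product] at hz
    obtain ⟨hz1, hz2⟩ := hz
    rw [Finset.mem_filter] at hz1 hz2
    simp only [eset, Finset.mem_filter, Finset.mem_product]
    refine ⟨⟨?_, ?_⟩, ?_⟩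
    · rw [hY, hbox] at hz1; exact hz1.1
    · rw [hY, hbox] at hz2; exact hz2.1
    · have hdiff : (∑ i, θY i * ((z.1 i : ℝ) ^ 2 - (z.2 i : ℝ) ^ 2)) = G z.1 - G z.2 := by
        rw [hG]
        simp only [mul_sub]
        rw [Finset.sum_sub_distrib]
      rw [hdiff, add_zero, abs_le]
      have h1 : ((j₀ : ℤ) : ℝ) ≤ G z.1 := hz1.2 ▸ Int.floor_le (G z.1)
      have h2 : G z.1 < ((j₀ : ℤ) : ℝ) + 1 := hz1.2 ▸ Int.lt_floor_add_one (G z.1)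
      have h3 : ((j₀ : ℤ) : ℝ) ≤ G z.2 := hz2.2 ▸ Int.floor_le (G z.2)
      have h4 : G z.2 < ((j₀ : ℤ) : ℝ) + 1 := hz2.2 ▸ Int.lt_floor_add_one (G z.2)
      constructor <;> linarith
  have hSX : (∑ j ∈ J, ((nX j : ℝ)) ^ 2) ≤ ((eset 2 θX M 0).card : ℝ) := by
    have hdisjX : ∀ a ∈ J, ∀ b ∈ J, a ≠ b →
        Disjoint ((X.filter (fun x => ⌊F x⌋ = a)) ×ˢ (X.filter (fun x => ⌊F x⌋ = a)))
          ((X.filter (fun x => ⌊F x⌋ = b)) ×ˢ (X.filter (fun x => ⌊F x⌋ = b))) := by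
      intro a _ b _ hab
      rw [Finset.disjoint_left]
      intro z hza hzb
      apply hab
      have h1 := (Finset.mem_filter.mp (Finset.mem_product.mp hza).1).2
      have h2 := (Finset.mem_filter.mp (Finset.mem_product.mp hzb).1).2
      omega
    have hnat : (∑ j ∈ J, nX j * nX j) ≤ (eset 2 θX M 0).card := by
      calc ∑ j ∈ J, nX j * nX j
          = ∑ j ∈ J, ((X.filter (fun x => ⌊F x⌋ = j))
            ×ˢ (X.filter (fun x => ⌊F x⌋ = j))).card := by
            apply Finset.sum_congr rfl
            intro j _
            rw [Finset.card_product, hnX]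
        _ = (J.biUnion (fun j => (X.filter (fun x => ⌊F x⌋ = j))
            ×ˢ (X.filter (fun x => ⌊F x⌋ = j)))).card := (Finset.card_biUnion hdisjX).symm
        _ ≤ (eset 2 θX M 0).card := by
            apply Finset.card_le_card
            intro z hz
            rw [Finset.mem_biUnion] at hz
            obtain ⟨j, _, hzj⟩ := hz
            exact hsubX j hzj
    calc (∑ j ∈ J, ((nX j : ℝ)) ^ 2) = ((∑ j ∈ J, nX j * nX j : ℕ) : ℝ) := by
          push_cast
          apply Finset.sum_congr rfl
          intro j _
          ring
      _ ≤ _ := by exact_mod_cast hnat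
  have hSY : ∀ cc : ℤ, (∑ j ∈ J, ((nY (cc - j) : ℝ)) ^ 2) ≤ ((eset e θY M 0).card : ℝ) := by
    intro cc
    have hdisjY : ∀ a ∈ J, ∀ b ∈ J, a ≠ b →
        Disjoint ((Y.filter (fun y => ⌊G y⌋ = cc - a)) ×ˢ (Y.filter (fun y => ⌊G y⌋ = cc - a)))
          ((Y.filter (fun y => ⌊G y⌋ = cc - b)) ×ˢ (Y.filter (fun y => ⌊G y⌋ = cc - b))) := by
      intro a _ b _ hab
      rw [Finset.disjoint_left]
      intro z hza hzb
      apply hab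
      have h1 := (Finset.mem_filter.mp (Finset.mem_product.mp hza).1).2
      have h2 := (Finset.mem_filter.mp (Finset.mem_product.mp hzb).1).2
      omega
    have hnat : (∑ j ∈ J, nY (cc - j) * nY (cc - j)) ≤ (eset e θY M 0).card := by
      calc ∑ j ∈ J, nY (cc - j) * nY (cc - j)
          = ∑ j ∈ J, ((Y.filter (fun y => ⌊G y⌋ = cc - j))
            ×ˢ (Y.filter (fun y => ⌊G y⌋ = cc - j))).card := by
            apply Finset.sum_congr rfl
            intro j _
            rw [Finset.card_product, hnY]
        _ = (J.biUnion (fun j => (Y.filter (fun y => ⌊G y⌋ = cc - j))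
            ×ˢ (Y.filter (fun y => ⌊G y⌋ = cc - j)))).card := (Finset.card_biUnion hdisjY).symm
        _ ≤ (eset e θY M 0).card := by
            apply Finset.card_le_card
            intro z hz
            rw [Finset.mem_biUnion] at hz
            obtain ⟨j, _, hzj⟩ := hz
            exact hsubY (cc - j) hzj
    calc (∑ j ∈ J, ((nY (cc - j) : ℝ)) ^ 2)
        = ((∑ j ∈ J, nY (cc - j) * nY (cc - j) : ℕ) : ℝ) := by
          push_cast
          apply Finset.sum_congr rfl
          intro j _
          ring
      _ ≤ _ := by exact_mod_cast hnat
  -- Cauchy–Schwarz per window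
  set B2 : ℝ := A2 * N ^ ((2:ℝ) + ε) with hB2def
  set Be : ℝ := Ae * N ^ (2 * (ke:ℝ) + ε) with hBedef
  have hB2nn : 0 ≤ B2 := by
    rw [hB2def]; positivity
  have hBenn : 0 ≤ Be := by
    rw [hBedef]; positivity
  have hkey : ∀ cc ∈ C5, (∑ j ∈ J, (nX j : ℝ) * (nY (cc - j) : ℝ)) ≤ Real.sqrt (B2 * Be) := by
    intro cc _
    have hCS := Finset.sum_mul_sq_le_sq_mul_sq J (fun j => (nX j : ℝ)) (fun j => (nY (cc - j) : ℝ))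
    have hSX' : (∑ j ∈ J, ((nX j : ℝ)) ^ 2) ≤ B2 := le_trans hSX hB2
    have hSY' : (∑ j ∈ J, ((nY (cc - j) : ℝ)) ^ 2) ≤ Be := le_trans (hSY cc) hBe
    have hgnn : (0:ℝ) ≤ ∑ j ∈ J, ((nY (cc - j) : ℝ)) ^ 2 :=
      Finset.sum_nonneg (fun j _ => sq_nonneg _)
    have hP2 : (∑ j ∈ J, (nX j : ℝ) * (nY (cc - j) : ℝ)) ^ 2 ≤ B2 * Be :=
      le_trans hCS (mul_le_mul hSX' hSY' hgnn hB2nn)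
    have hPnn : (0:ℝ) ≤ ∑ j ∈ J, (nX j : ℝ) * (nY (cc - j) : ℝ) :=
      Finset.sum_nonneg (fun j _ => mul_nonneg (Nat.cast_nonneg _) (Nat.cast_nonneg _))
    calc (∑ j ∈ J, (nX j : ℝ) * (nY (cc - j) : ℝ))
        = Real.sqrt ((∑ j ∈ J, (nX j : ℝ) * (nY (cc - j) : ℝ)) ^ 2) := (Real.sqrt_sq hPnn).symm
      _ ≤ Real.sqrt (B2 * Be) := Real.sqrt_le_sqrt hP2
  have hC5card : (C5.card : ℝ) = 5 := by
    have : C5.card = 5 := by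
      rw [hC5, Int.card_Icc]
      omega
    exact_mod_cast this
  -- final sqrt computation
  have hsqrt : Real.sqrt (B2 * Be) = Real.sqrt (A2 * Ae) * N ^ ((ke:ℝ) + 1 + ε) := by
    have hpow : N ^ ((2:ℝ) + ε) * N ^ (2 * (ke:ℝ) + ε) = (N ^ ((ke:ℝ) + 1 + ε)) ^ (2:ℕ) := by
      rw [← Real.rpow_natCast (N ^ ((ke:ℝ) + 1 + ε)) 2, ← Real.rpow_mul hN0.le,
        ← Real.rpow_add hN0]
      congr 1
      push_cast; ring
    have e0 : B2 * Be = (A2 * Ae) * (N ^ ((ke:ℝ) + 1 + ε)) ^ (2:ℕ) := by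
      rw [hB2def, hBedef, ← hpow]; ring
    rw [e0, Real.sqrt_mul (by positivity) _, Real.sqrt_sq (Real.rpow_nonneg hN0.le _)]
  have hexp : ((2 + e : ℕ) : ℝ) - 2 + ε = (ke:ℝ) + 1 + ε := by
    rw [he]; push_cast; ring
  -- conclude
  rw [hncard, hexp]
  calc (𝒮.card : ℝ) ≤ (𝒯.card : ℝ) := by exact_mod_cast hST
    _ ≤ ∑ cc ∈ C5, ∑ j ∈ J, (nX j : ℝ) * (nY (cc - j) : ℝ) := hTsum
    _ ≤ ∑ _cc ∈ C5, Real.sqrt (B2 * Be) := Finset.sum_le_sum hkey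
    _ = 5 * Real.sqrt (B2 * Be) := by
        rw [Finset.sum_const, nsmul_eq_mul, hC5card]
    _ = 5 * Real.sqrt (A2 * Ae) * N ^ ((ke:ℝ) + 1 + ε) := by
        rw [hsqrt]; ring
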